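/- (Skew symmetry, nonnegative part, without locality) Let A(z) and B(z) be arbitrary fields on M. Then for every integer m and every nonnegative integer n: (B_(m)A)_n = ∑_{i=0}^{n} (−1)^{m+i+1} (∂^{(i)}(A_(m+i)B))_n, i.e., the annihilation parts satisfy (B(z)_(m)A(z))_+ = ∑_{i≥0} (−1)^{m+i+1} ∂^{(i)}(A(z)_(m+i)B(z))_+. -/

import Mathlib

open Finset

section VA

variable {k M : Type*} [Field k] [CharZero k] [AddCommGroup M] [Module k M]

/-- Generalized binomial coefficient `C(n,i)` for `n : ℤ`, `i : ℕ`. -/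
def ichoose (n : ℤ) (i : ℕ) : ℤ :=
  if 0 ≤ n then (n.toNat.choose i : ℤ)
  else (-1) ^ i * ((((i : ℤ) - 1 - n).toNat.choose i : ℤ))

/-- `(-1)^m` for an integer `m`. -/
def msign (m : ℤ) : ℤ := if Even m then 1 else -1

/-- A series on `M`, given by its Fourier modes `A_n`. -/
abbrev Ser (M : Type*) : Type _ := ℤ → M → M

/-- `A(z)` is a field: modes applied to any vector vanish for large index. -/
def IsFieldSer (A : Ser M) : Prop := ∀ v : M, ∃ n₀ : ℤ, ∀ n ≥ n₀, A n v = 0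

/-- All modes are `k`-linear, i.e. the coefficients are endomorphisms of the
vector space `M`. -/
def IsLinSer (A : Ser M) : Prop := ∀ n : ℤ, IsLinearMap k (A n)

/-- Residual `m`-th product, in Fourier modes:
`(A_(m)B)_n = ∑_{i≥0} (-1)^i C(m,i) (A_{m-i} B_{n+i} - (-1)^m B_{m+n-i} A_i)`. -/
noncomputable def resProd (A B : Ser M) (m : ℤ) : Ser M := fun n v =>
  ∑ᶠ i : ℕ, ((-1 : ℤ) ^ i * ichoose m i) •
    (A (m - (i : ℤ)) (B (n + (i : ℤ)) v) - msign m • B (m + n - (i : ℤ)) (A (i : ℤ) v))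

/-- Mutual locality at order `n`, in Fourier modes:
`∑_{i=0}^n (-1)^i C(n,i) (A_{p+n-i} B_{q+i} - (-1)^n B_{q+n-i} A_{p+i}) = 0`. -/
def IsLocalAt (A B : Ser M) (n : ℕ) : Prop :=
  ∀ (p q : ℤ) (v : M),
    ∑ i ∈ Finset.range (n + 1), ((-1 : ℤ) ^ i * (n.choose i : ℤ)) •
      (A (p + (n : ℤ) - (i : ℤ)) (B (q + (i : ℤ)) v)
        - (-1 : ℤ) ^ n • B (q + (n : ℤ) - (i : ℤ)) (A (p + (i : ℤ)) v)) = 0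

/-- `A` and `B` are mutually local of order exactly `n₀`. -/
def HasOrder (A B : Ser M) (n₀ : ℕ) : Prop :=
  IsLocalAt A B n₀ ∧ ∀ n : ℕ, IsLocalAt A B n → n₀ ≤ n

/-- The identity field `I(z) = id`. -/
def idSer : Ser M := fun n v => if n = -1 then v else 0

/-- Derivative of a series: `(∂A)_n = -n A_{n-1}`. -/
def dSer (A : Ser M) : Ser M := fun n v => (-n) • A (n - 1) v

/-- Divided-power derivative: `(∂^{(i)}A)_n = (-1)^i C(n,i) A_{n-i}`. -/
def dpowSer (i : ℕ) (A : Ser M) : Ser M := fun n v =>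
  ((-1 : ℤ) ^ i * ichoose n i) • A (n - (i : ℤ)) v

/-- Normally ordered product `:A(z)B(z): = A(z)₋B(z) + B(z)A(z)₊`, in modes. -/
noncomputable def noProd (A B : Ser M) : Ser M := fun n v =>
  (∑ᶠ i : ℕ, A (-(i : ℤ) - 1) (B (n + (i : ℤ)) v)) + ∑ᶠ i : ℕ, B (n - 1 - (i : ℤ)) (A (i : ℤ) v)

lemma ichoose_zero' (m : ℤ) : ichoose m 0 = 1 := by
  unfold ichoose; split <;> simp

lemma ichoose_natCast' (n i : ℕ) : ichoose (n : ℤ) i = (n.choose i : ℤ) := by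
  unfold ichoose
  rw [if_pos (Int.natCast_nonneg n), Int.toNat_natCast]

lemma ichoose_pascal (m : ℤ) (j : ℕ) :
    ichoose (m + 1) (j + 1) = ichoose m (j + 1) + ichoose m j := by
  unfold ichoose
  rcases lt_trichotomy m (-1) with h | h | h
  · have h1 : ¬ (0:ℤ) ≤ m + 1 := by omega
    have h2 : ¬ (0:ℤ) ≤ m := by omega
    rw [if_neg h1, if_neg h2, if_neg h2]
    have e1 : (((j:ℕ)+1 : ℤ) - 1 - (m+1)).toNat = (((j:ℕ) :ℤ) - 1 - m).toNat := by push_cast; omega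
    have e2 : (((j:ℕ)+1 : ℤ) - 1 - m).toNat = (((j:ℕ):ℤ) - 1 - m).toNat + 1 := by push_cast; omega
    push_cast
    rw [e1, e2]
    rw [Nat.choose_succ_succ]
    push_cast
    ring
  · subst h
    norm_num
    have e1 : (((j:ℕ)+1 : ℤ) - 1 - (-1)).toNat = j + 1 := by push_cast; omega
    have e2 : (((j:ℕ) : ℤ) - 1 - (-1)).toNat = j := by omega
    rw [pow_succ]
    ring
  · have h0 : (0:ℤ) ≤ m := by omega
    have h1 : (0:ℤ) ≤ m + 1 := by omega
    rw [if_pos h1, if_pos h0, if_pos h0]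
    have e : (m+1).toNat = m.toNat + 1 := by omega
    rw [e, Nat.choose_succ_succ]
    push_cast
    ring

lemma alt_diff (n : ℕ) (g : ℕ → ℤ) :
    ∑ i ∈ range (n+2), (-1:ℤ)^i * ((n+1).choose i) * g i
      = ∑ i ∈ range (n+1), (-1:ℤ)^i * (n.choose i) * g i
        - ∑ i ∈ range (n+1), (-1:ℤ)^i * (n.choose i) * g (i+1) := by
  rw [Finset.sum_range_succ' (fun i => (-1:ℤ)^i * ((n+1).choose i) * g i) (n+1)]
  have h1 : ∀ i ∈ range (n+1), (-1:ℤ)^(i+1) * (((n+1).choose (i+1) : ℕ) : ℤ) * g (i+1)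
      = (-1)^(i+1) * (n.choose (i+1)) * g (i+1) + (-((-1:ℤ)^i * (n.choose i) * g (i+1))) := by
    intro i _; rw [Nat.choose_succ_succ']; push_cast; ring
  rw [Finset.sum_congr rfl h1, Finset.sum_add_distrib]
  have hdrop : ∑ i ∈ range (n+1), (-1:ℤ)^(i+1) * (n.choose (i+1)) * g (i+1)
      = ∑ i ∈ range n, (-1:ℤ)^(i+1) * (n.choose (i+1)) * g (i+1) := by
    rw [Finset.sum_range_succ, Nat.choose_succ_self]
    push_cast
    ring
  have h2 : (∑ i ∈ range (n+1), (-1:ℤ)^(i+1) * (n.choose (i+1)) * g (i+1)) + g 0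
      = ∑ i ∈ range (n+1), (-1:ℤ)^i * (n.choose i) * g i := by
    rw [Finset.sum_range_succ' (fun i => (-1:ℤ)^i * (n.choose i) * g i) n, hdrop]
    simp
  have h3 : ∑ i ∈ range (n+1), -((-1:ℤ)^i * (n.choose i) * g (i+1))
      = -∑ i ∈ range (n+1), (-1:ℤ)^i * (n.choose i) * g (i+1) := by
    rw [Finset.sum_neg_distrib]
  rw [h3, hdrop] at *
  simp only [Nat.choose_zero_right, Nat.cast_one, pow_zero, one_mul]
  linarith [h2]


lemma lemA (n : ℕ) : ∀ (m : ℤ) (j : ℕ),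
    ∑ i ∈ range (n+1), (-1:ℤ)^i * (n.choose i) * ichoose (m + i) j
      = (-1)^n * (if n ≤ j then ichoose m (j - n) else 0) := by
  induction n with
  | zero =>
    intro m j
    simp
  | succ n ih =>
    intro m j
    have key := alt_diff n (fun i => ichoose (m + i) j)
    have e1 : ∑ i ∈ range (n+1), (-1:ℤ)^i * (n.choose i) * ichoose (m + ((i:ℕ)+1 : ℕ)) j
        = ∑ i ∈ range (n+1), (-1:ℤ)^i * (n.choose i) * ichoose ((m+1) + (i:ℕ)) j := by
      refine Finset.sum_congr rfl fun i _ => ?_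
      congr 2
      push_cast
      ring
    rw [e1, ih, ih] at key
    rw [show n + 1 + 1 = n + 2 from rfl, key]
    rcases lt_trichotomy j n with h | h | h
    · rw [if_neg (show ¬ n ≤ j from by omega), if_neg (show ¬ n ≤ j from by omega),
        if_neg (show ¬ n + 1 ≤ j from by omega)]
      ring
    · rw [if_pos (show n ≤ j from by omega), if_pos (show n ≤ j from by omega),
        if_neg (show ¬ n + 1 ≤ j from by omega)]
      have e2 : j - n = 0 := by omega
      rw [e2, ichoose_zero', ichoose_zero']
      ring
    · rw [if_pos (show n ≤ j from by omega), if_pos (show n ≤ j from by omega),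
        if_pos (show n + 1 ≤ j from by omega)]
      have e2 : j - n = (j - (n+1)) + 1 := by omega
      rw [e2, ichoose_pascal]
      ring

lemma lemB (n : ℕ) : ∀ (m : ℤ) (u : ℕ),
    ∑ s ∈ range (n+1), (-1:ℤ)^s * (n.choose s) *
      (if s ≤ u then ichoose (m + n - s) (u - s) else 0) = ichoose m u := by
  induction n with
  | zero =>
    intro m u
    simp
  | succ n ih =>
    intro m u
    have key := alt_diff n (fun s => if s ≤ u then ichoose (m + ((n:ℤ)+1) - s) (u - s) else 0)
    have e1 : ∑ s ∈ range (n+1), (-1:ℤ)^s * (n.choose s) *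
          (if s ≤ u then ichoose (m + ((n:ℤ)+1) - (s:ℕ)) (u - s) else 0)
        = ∑ s ∈ range (n+1), (-1:ℤ)^s * (n.choose s) *
          (if s ≤ u then ichoose ((m+1) + (n:ℕ) - (s:ℕ)) (u - s) else 0) := by
      refine Finset.sum_congr rfl fun s _ => ?_
      congr 2
      congr 1
      push_cast
      ring
    rw [e1, ih] at key
    rcases Nat.eq_zero_or_pos u with hu | hu
    · subst hu
      have e2 : ∑ s ∈ range (n+1), (-1:ℤ)^s * (n.choose s) *
            (if s + 1 ≤ 0 then ichoose (m + ((n:ℤ)+1) - ((s:ℕ)+1:ℕ)) (0 - (s+1)) else 0)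
          = 0 := by
        apply Finset.sum_eq_zero
        intro s _
        rw [if_neg (by omega)]
        ring
      rw [e2] at key
      have hgoal : ∑ s ∈ range (n+1+1), (-1:ℤ)^s * (((n+1).choose s : ℕ) : ℤ) *
            (if s ≤ 0 then ichoose (m + ((n:ℕ)+1:ℕ) - (s:ℕ)) (0 - s) else 0)
          = ∑ s ∈ range (n+2), (-1:ℤ)^s * (((n+1).choose s : ℕ) : ℤ) *
            (if s ≤ 0 then ichoose (m + ((n:ℤ)+1) - (s:ℕ)) (0 - s) else 0) := by
        refine Finset.sum_congr rfl fun s _ => ?_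
        congr 2
      rw [hgoal, key, ichoose_zero', ichoose_zero']
      ring
    · obtain ⟨u', rfl⟩ : ∃ u', u = u' + 1 := ⟨u - 1, by omega⟩
      have e2 : ∑ s ∈ range (n+1), (-1:ℤ)^s * (n.choose s) *
            (if s + 1 ≤ u'+1 then ichoose (m + ((n:ℤ)+1) - ((s:ℕ)+1:ℕ)) (u'+1 - (s+1)) else 0)
          = ∑ s ∈ range (n+1), (-1:ℤ)^s * (n.choose s) *
            (if s ≤ u' then ichoose (m + (n:ℕ) - (s:ℕ)) (u' - s) else 0) := by
        refine Finset.sum_congr rfl fun s _ => ?_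
        congr 1
        refine if_congr (by omega) ?_ rfl
        have : u' + 1 - (s+1) = u' - s := by omega
        rw [this]
        congr 1
        push_cast
        ring
      rw [e2, ih] at key
      have hgoal : ∑ s ∈ range (n+1+1), (-1:ℤ)^s * (((n+1).choose s : ℕ) : ℤ) *
            (if s ≤ u'+1 then ichoose (m + ((n:ℕ)+1:ℕ) - (s:ℕ)) (u'+1 - s) else 0)
          = ∑ s ∈ range (n+2), (-1:ℤ)^s * (((n+1).choose s : ℕ) : ℤ) *
            (if s ≤ u'+1 then ichoose (m + ((n:ℤ)+1) - (s:ℕ)) (u'+1 - s) else 0) := by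
        refine Finset.sum_congr rfl fun s _ => ?_
        congr 2
      rw [hgoal, key]
      have e3 : ichoose (m+1) (u'+1) = ichoose m (u'+1) + ichoose m u' := ichoose_pascal m u'
      linarith

lemma msign_mul (a b : ℤ) : msign (a + b) = msign a * msign b := by
  unfold msign
  by_cases ha : Even a <;> by_cases hb : Even b <;>
    simp [Int.even_add, ha, hb]

lemma msign_natCast (i : ℕ) : msign (i : ℤ) = (-1:ℤ)^i := by
  unfold msign
  by_cases h : Even i
  · rw [if_pos (by exact_mod_cast h), h.neg_one_pow]
  · rw [if_neg (by simpa using h), (Nat.not_even_iff_odd.1 h).neg_one_pow]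

lemma msign_cases (m : ℤ) : msign m = 1 ∨ msign m = -1 := by
  unfold msign; split <;> simp

lemma msign_shift (m : ℤ) (i : ℕ) : msign (m + i) = msign m * (-1:ℤ)^i := by
  rw [msign_mul, msign_natCast]

lemma msign_shift1 (m : ℤ) (i : ℕ) : msign (m + i + 1) = -(msign m * (-1:ℤ)^i) := by
  rw [msign_mul, msign_shift]
  have h1 : msign 1 = -1 := by decide
  rw [h1]; ring

lemma msign_sq (x : ℤ) : msign x * msign x = 1 := by
  unfold msign; split <;> norm_num

lemma msign_succ (x : ℤ) : msign (x + 1) = -msign x := by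
  rw [msign_mul]
  have h1 : msign 1 = -1 := by decide
  rw [h1]; ring

lemma smul_expand {M : Type*} [AddCommGroup M] (a b c d : ℤ) (P Q : M) :
    a • (b • (c • (P - d • Q))) = (a*b*c) • P + (-(a*b*c*d)) • Q := by
  module

lemma neg_one_pow_sub (u s : ℕ) (h : s ≤ u) : (-1:ℤ)^(u-s) = (-1)^u * (-1)^s := by
  obtain ⟨d, rfl⟩ : ∃ d, u = s + d := ⟨u - s, by omega⟩
  rw [show s + d - s = d from by omega, pow_add]
  have hsq : (-1:ℤ)^s * (-1)^s = 1 := by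
    rw [← pow_add]
    exact Even.neg_one_pow ⟨s, rfl⟩
  linear_combination (-(-1:ℤ)^d) * hsq


/-- Auxiliary term for the `B∘A` part. -/
noncomputable def auxK (A B : Ser M) (v : M) (m : ℤ) (n : ℕ) : ℕ → M := fun u =>
  ((-1:ℤ)^(u+n) * ichoose m (u-n)) • B (m + (n:ℤ) - (u:ℤ)) (A (u:ℤ) v)

/-- Auxiliary term for the `A∘B` part. -/
noncomputable def auxPsi (A B : Ser M) (v : M) (m : ℤ) (n : ℕ) : ℕ → ℕ → M := fun i u =>
  (if n - i ≤ u then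
      -msign m * (n.choose i : ℤ) * ((-1:ℤ)^(u-(n-i)) * ichoose (m+(i:ℤ)) (u-(n-i)))
    else 0)
    • A (m + (n:ℤ) - (u:ℤ)) (B (u:ℤ) v)

/-- Skew symmetry for the nonnegative modes, without locality: for arbitrary fields
`A, B`, every integer `m` and every nonnegative `n`,
`(B_(m)A)_n = ∑_{i=0}^n (-1)^{m+i+1} (∂^{(i)}(A_(m+i)B))_n`. -/
theorem stmt16 (A B : Ser M) (hA : IsFieldSer A) (hB : IsFieldSer B)
    (hlA : IsLinSer (k := k) A) (hlB : IsLinSer (k := k) B)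
    (m : ℤ) (n : ℕ) (v : M) :
    resProd B A m (n : ℤ) v
      = ∑ i ∈ Finset.range (n + 1),
          msign (m + (i : ℤ) + 1) • dpowSer i (resProd A B (m + i)) (n : ℤ) v := by
  classical
  obtain ⟨na, hna⟩ := hA v
  obtain ⟨nb, hnb⟩ := hB v
  have hA0 : ∀ p : ℤ, A p 0 = 0 := fun p => (hlA p).map_zero
  have hB0 : ∀ p : ℤ, B p 0 = 0 := fun p => (hlB p).map_zero
  set N : ℕ := na.toNat + nb.toNat + n + 1 with hNdef
  have hnN : n ≤ N := by omega
  have hAv : ∀ p : ℤ, (N : ℤ) ≤ p → A p v = 0 := by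
    intro p hp
    apply hna
    have h1 : na ≤ (na.toNat : ℤ) := Int.self_le_toNat na
    rw [hNdef] at hp
    push_cast at hp
    omega
  have hBv : ∀ p : ℤ, (N : ℤ) ≤ p → B p v = 0 := by
    intro p hp
    apply hnb
    have h1 : nb ≤ (nb.toNat : ℤ) := Int.self_le_toNat nb
    rw [hNdef] at hp
    push_cast at hp
    omega
  -- convert finsums to finite sums
  have conv : ∀ (C D : Ser M) (μ q : ℤ), 0 ≤ q →
      (∀ p : ℤ, C p 0 = 0) → (∀ p : ℤ, (N:ℤ) ≤ p → C p v = 0) →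
      (∀ p : ℤ, D p 0 = 0) → (∀ p : ℤ, (N:ℤ) ≤ p → D p v = 0) →
      resProd C D μ q v = ∑ j ∈ range N, ((-1:ℤ)^j * ichoose μ j) •
        (C (μ - (j:ℤ)) (D (q + (j:ℤ)) v) - msign μ • D (μ + q - (j:ℤ)) (C (j:ℤ) v)) := by
    intro C D μ q hq hC0 hCv hD0 hDv
    apply finsum_eq_sum_of_support_subset
    intro j hj
    simp only [Function.mem_support, ne_eq] at hj
    simp only [Finset.coe_range, Set.mem_Iio]
    by_contra hjN
    push_neg at hjN
    apply hj
    have hj1 : (N:ℤ) ≤ (j:ℤ) := by exact_mod_cast hjN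
    rw [hDv (q + (j:ℤ)) (by omega), hCv (j:ℤ) hj1, hC0, hD0]
    simp
  rw [conv B A m (n:ℤ) (by positivity) hB0 hBv hA0 hAv]
  have hrhs : ∀ i ∈ range (n+1), msign (m + (i:ℤ) + 1) • dpowSer i (resProd A B (m + i)) (n:ℤ) v
      = msign (m + (i:ℤ) + 1) • (((-1:ℤ)^i * (n.choose i : ℤ)) •
          ∑ j ∈ range N, ((-1:ℤ)^j * ichoose (m + (i:ℤ)) j) •
            (A ((m+(i:ℤ)) - (j:ℤ)) (B (((n:ℤ) - (i:ℤ)) + (j:ℤ)) v)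
              - msign (m+(i:ℤ)) • B ((m+(i:ℤ)) + ((n:ℤ)-(i:ℤ)) - (j:ℤ)) (A (j:ℤ) v))) := by
    intro i hi
    simp only [Finset.mem_range] at hi
    simp only [dpowSer]
    rw [ichoose_natCast']
    rw [conv A B (m + (i:ℤ)) ((n:ℤ) - (i:ℤ)) (by omega) hA0 hAv hB0 hBv]
  rw [Finset.sum_congr rfl hrhs]
  -- expand both sides into two parts
  have lhsexp : ∑ j ∈ range N, ((-1:ℤ)^j * ichoose m j) •
        (B (m - (j:ℤ)) (A ((n:ℤ) + (j:ℤ)) v) - msign m • A (m + (n:ℤ) - (j:ℤ)) (B (j:ℤ) v))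
      = (∑ j ∈ range N, (-msign m * ((-1:ℤ)^j * ichoose m j)) • A (m + (n:ℤ) - (j:ℤ)) (B (j:ℤ) v))
        + ∑ j ∈ range N, ((-1:ℤ)^j * ichoose m j) • B (m - (j:ℤ)) (A ((n:ℤ) + (j:ℤ)) v) := by
    rw [← Finset.sum_add_distrib]
    refine Finset.sum_congr rfl fun j _ => ?_
    module
  have expand : ∑ i ∈ range (n+1), msign (m + (i:ℤ) + 1) • (((-1:ℤ)^i * (n.choose i : ℤ)) •
        ∑ j ∈ range N, ((-1:ℤ)^j * ichoose (m + (i:ℤ)) j) •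
          (A ((m+(i:ℤ)) - (j:ℤ)) (B (((n:ℤ) - (i:ℤ)) + (j:ℤ)) v)
            - msign (m+(i:ℤ)) • B ((m+(i:ℤ)) + ((n:ℤ)-(i:ℤ)) - (j:ℤ)) (A (j:ℤ) v)))
      = (∑ i ∈ range (n+1), ∑ j ∈ range N,
            (-msign m * (n.choose i : ℤ) * ((-1:ℤ)^j * ichoose (m+(i:ℤ)) j)) •
              A (m + (i:ℤ) - (j:ℤ)) (B ((n:ℤ) - (i:ℤ) + (j:ℤ)) v))
        + ∑ i ∈ range (n+1), ∑ j ∈ range N,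
            ((-1:ℤ)^i * (-1:ℤ)^j * (n.choose i : ℤ) * ichoose (m+(i:ℤ)) j) •
              B (m + (n:ℤ) - (j:ℤ)) (A (j:ℤ) v) := by
    rw [← Finset.sum_add_distrib]
    refine Finset.sum_congr rfl fun i _ => ?_
    rw [Finset.smul_sum, Finset.smul_sum, ← Finset.sum_add_distrib]
    refine Finset.sum_congr rfl fun j _ => ?_
    rw [show m + (i:ℤ) + ((n:ℤ) - (i:ℤ)) - (j:ℤ) = m + (n:ℤ) - (j:ℤ) from by ring]
    rw [smul_expand]
    have hii : (-1:ℤ)^i * (-1:ℤ)^i = 1 := by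
      rw [← pow_add]; exact Even.neg_one_pow ⟨i, rfl⟩
    have f1 : msign (m+(i:ℤ)+1) * msign (m+(i:ℤ)) = -1 := by
      rw [msign_succ]
      have h2 := msign_sq (m+(i:ℤ))
      linarith
    have f2 : msign (m+(i:ℤ)+1) * (-1:ℤ)^i = -msign m := by
      rw [msign_succ, msign_shift]
      linear_combination (-(msign m)) * hii
    congr 1
    · congr 1
      linear_combination ((n.choose i : ℤ) * ((-1:ℤ)^j * ichoose (m+(i:ℤ)) j)) * f2
    · congr 1
      linear_combination (-((-1:ℤ)^i * (-1:ℤ)^j * (n.choose i : ℤ) * ichoose (m+(i:ℤ)) j)) * f1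
  rw [lhsexp, expand]
  congr 1
  · -- E1 : the A∘B part
    have step1 : ∀ i ∈ range (n+1),
        ∑ j ∈ range N, (-msign m * (n.choose i : ℤ) * ((-1:ℤ)^j * ichoose (m+(i:ℤ)) j)) •
            A (m + (i:ℤ) - (j:ℤ)) (B ((n:ℤ) - (i:ℤ) + (j:ℤ)) v)
          = ∑ u ∈ range (n+N), auxPsi A B v m n i u := by
      intro i hi
      simp only [Finset.mem_range] at hi
      have hin : i ≤ n := by omega
      have haveA : ∀ j ∈ range N,
          (-msign m * (n.choose i : ℤ) * ((-1:ℤ)^j * ichoose (m+(i:ℤ)) j)) •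
              A (m + (i:ℤ) - (j:ℤ)) (B ((n:ℤ) - (i:ℤ) + (j:ℤ)) v)
            = auxPsi A B v m n i ((n-i)+j) := by
        intro j _
        simp only [auxPsi]
        rw [if_pos (Nat.le_add_right _ _)]
        have c2 : (n-i)+j-(n-i) = j := by omega
        rw [c2]
        have e1 : (((n-i)+j : ℕ):ℤ) = (n:ℤ) - (i:ℤ) + (j:ℤ) := by
          rw [Nat.cast_add, Nat.cast_sub hin]
        rw [e1, show m + (n:ℤ) - ((n:ℤ)-(i:ℤ)+(j:ℤ)) = m + (i:ℤ) - (j:ℤ) from by ring]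
      rw [Finset.sum_congr rfl haveA]
      have s1 : ∑ u ∈ Ico (n-i) ((n-i)+N), auxPsi A B v m n i u
          = ∑ j ∈ range N, auxPsi A B v m n i ((n-i)+j) := by
        rw [Finset.sum_Ico_eq_sum_range, show (n-i)+N-(n-i) = N from by omega]
      rw [← s1]
      have s2 : ∑ u ∈ Ico ((n-i)+N) (n+N), auxPsi A B v m n i u = 0 := by
        apply Finset.sum_eq_zero
        intro u hu
        simp only [Finset.mem_Ico] at hu
        simp only [auxPsi]
        rw [hBv (u:ℤ) (by exact_mod_cast (by omega : N ≤ u)), hA0, smul_zero]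
      have s3 : ∑ u ∈ Ico 0 (n-i), auxPsi A B v m n i u = 0 := by
        apply Finset.sum_eq_zero
        intro u hu
        simp only [Finset.mem_Ico] at hu
        simp only [auxPsi]
        rw [if_neg (by omega), zero_smul]
      rw [Finset.range_eq_Ico,
        ← Finset.sum_Ico_consecutive _ (Nat.zero_le (n-i)) (show n-i ≤ n+N from by omega),
        s3, zero_add,
        ← Finset.sum_Ico_consecutive _ (show n-i ≤ (n-i)+N from by omega)
            (show (n-i)+N ≤ n+N from by omega),
        s2, add_zero]
    rw [Finset.sum_congr rfl step1, Finset.sum_comm]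
    have step3 : ∀ u ∈ range (n+N),
        ∑ i ∈ range (n+1), auxPsi A B v m n i u
          = (-msign m * (-1:ℤ)^u * ichoose m u) • A (m + (n:ℤ) - (u:ℤ)) (B (u:ℤ) v) := by
      intro u _
      simp only [auxPsi]
      rw [← Finset.sum_smul]
      congr 1
      rw [← Finset.sum_range_reflect]
      have hre : ∀ s ∈ range (n+1),
          (if n - (n + 1 - 1 - s) ≤ u then
              -msign m * (n.choose (n + 1 - 1 - s) : ℤ) *
                ((-1:ℤ)^(u-(n-(n + 1 - 1 - s))) * ichoose (m+((n + 1 - 1 - s : ℕ):ℤ)) (u-(n-(n + 1 - 1 - s))))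
            else 0)
          = (-msign m * (-1:ℤ)^u) *
              ((-1:ℤ)^s * (n.choose s : ℤ) *
                (if s ≤ u then ichoose (m + (n:ℤ) - (s:ℤ)) (u - s) else 0)) := by
        intro s hs
        simp only [Finset.mem_range] at hs
        have hsn : s ≤ n := by omega
        have c1 : n + 1 - 1 - s = n - s := by omega
        have c2 : n - (n - s) = s := by omega
        rw [c1, c2]
        split_ifs with h
        · rw [Nat.choose_symm hsn, Nat.cast_sub hsn, ← add_sub_assoc, neg_one_pow_sub u s h]
          ring
        · ring
      rw [Finset.sum_congr rfl hre, ← Finset.mul_sum, lemB n m u]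
    rw [Finset.sum_congr rfl step3]
    have hlhs2 : ∀ j ∈ range N,
        (-msign m * ((-1:ℤ)^j * ichoose m j)) • A (m + (n:ℤ) - (j:ℤ)) (B (j:ℤ) v)
          = (-msign m * (-1:ℤ)^j * ichoose m j) • A (m + (n:ℤ) - (j:ℤ)) (B (j:ℤ) v) := by
      intro j _
      rw [mul_assoc]
    rw [Finset.sum_congr rfl hlhs2]
    apply Finset.sum_subset (Finset.range_subset_range.2 (by omega : N ≤ n+N))
    intro u _ hu
    simp only [Finset.mem_range, not_lt] at hu
    rw [hBv (u:ℤ) (by exact_mod_cast hu), hA0, smul_zero]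
  · -- E2 : the B∘A part
    have h2 : ∀ j ∈ range N,
        (∑ i ∈ range (n+1), ((-1:ℤ)^i * (-1:ℤ)^j * (n.choose i : ℤ) * ichoose (m+(i:ℤ)) j) •
            B (m + (n:ℤ) - (j:ℤ)) (A (j:ℤ) v))
          = if n ≤ j then auxK A B v m n j else 0 := by
      intro j _
      rw [← Finset.sum_smul]
      have hc : ∑ i ∈ range (n+1), ((-1:ℤ)^i * (-1:ℤ)^j * (n.choose i : ℤ) * ichoose (m+(i:ℤ)) j)
          = (-1:ℤ)^(j+n) * (if n ≤ j then ichoose m (j-n) else 0) := by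
        have h1 : ∑ i ∈ range (n+1), ((-1:ℤ)^i * (-1:ℤ)^j * (n.choose i : ℤ) * ichoose (m+(i:ℤ)) j)
            = (-1:ℤ)^j * ∑ i ∈ range (n+1), (-1:ℤ)^i * (n.choose i : ℤ) * ichoose (m+(i:ℤ)) j := by
          rw [Finset.mul_sum]
          exact Finset.sum_congr rfl fun i _ => by ring
        rw [h1, lemA n m j, pow_add]
        ring
      rw [hc]
      simp only [auxK]
      split_ifs with h
      · rfl
      · rw [mul_zero, zero_smul]
    rw [Finset.sum_comm, Finset.sum_congr rfl h2]
    have h3 : ∀ j ∈ range N,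
        ((-1:ℤ)^j * ichoose m j) • B (m - (j:ℤ)) (A ((n:ℤ) + (j:ℤ)) v)
          = auxK A B v m n (n+j) := by
      intro j _
      simp only [auxK]
      have c1 : (-1:ℤ)^(n+j+n) = (-1:ℤ)^j := by
        rw [show n+j+n = j + 2*n from by omega, pow_add, pow_mul]
        norm_num
      have c2 : n + j - n = j := by omega
      rw [c1, c2]
      have e1 : ((n+j : ℕ) : ℤ) = (n:ℤ) + (j:ℤ) := by push_cast; ring
      rw [e1, show m + (n:ℤ) - ((n:ℤ)+(j:ℤ)) = m - (j:ℤ) from by ring]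
    rw [Finset.sum_congr rfl h3]
    rw [Finset.sum_ite, Finset.sum_const_zero, add_zero]
    have hfil : (range N).filter (fun j => n ≤ j) = Ico n N := by
      ext x
      simp only [Finset.mem_filter, Finset.mem_range, Finset.mem_Ico]
      omega
    rw [hfil]
    have s1 : ∑ u ∈ Ico n (n+N), auxK A B v m n u = ∑ j ∈ range N, auxK A B v m n (n+j) := by
      rw [Finset.sum_Ico_eq_sum_range, show n+N-n = N from by omega]
    rw [← s1, ← Finset.sum_Ico_consecutive _ hnN (show N ≤ n+N from by omega)]
    have s2 : ∑ u ∈ Ico N (n+N), auxK A B v m n u = 0 := by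
      apply Finset.sum_eq_zero
      intro u hu
      simp only [Finset.mem_Ico] at hu
      simp only [auxK]
      rw [hAv (u:ℤ) (by exact_mod_cast hu.1), hB0, smul_zero]
    rw [s2, add_zero]


end VA
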